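/- Let X be a Tychonoff space and let P be either pseudocompactness, or a closed hereditary Mrówka topological property that is preserved under finite closed sums of subspaces. For a one-point Tychonoff extension Y of X, the following are equivalent: (1) Y has P; (2) X is locally-P and βX\λ_P X ⊆ Θ_X(Y). Consequently, Θ_X maps {Y ∈ E(X) : Y has P} onto the set of all nonempty compact subsets C of βX\X with βX\λ_P X ⊆ C. -/

import Mathlib

open Set Topology Filter

universe u

/-- A one-point Tychonoff extension of `X`: a Tychonoff space containing (a homeomorphic copy
of) `X` as a dense subspace whose complement is a single point `pt`. -/
structure OnePointExt (X : Type u) [TopologicalSpace X] : Type (u + 1) where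
  carrier : Type u
  top : TopologicalSpace carrier
  t35 : @T35Space carrier top
  ι : X → carrier
  emb : @Topology.IsEmbedding X carrier _ top ι
  pt : carrier
  range_eq : Set.range ι = {pt}ᶜ
  dense : @DenseRange carrier top X ι

attribute [instance] OnePointExt.top OnePointExt.t35

variable {X : Type u} [TopologicalSpace X]

/-- The partial order on one-point extensions: `Y₁ ≤ Y₂` iff there is a continuous map from
`Y₂` into `Y₁` fixing `X` pointwise. -/
def OnePointExt.le (Y1 Y2 : OnePointExt X) : Prop :=
  ∃ f : Y2.carrier → Y1.carrier, Continuous f ∧ ∀ x, f (Y2.ι x) = Y1.ι x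

/-- Equivalence of extensions: a homeomorphism fixing `X` pointwise. -/
def OnePointExt.equiv (Y1 Y2 : OnePointExt X) : Prop :=
  ∃ h : Y1.carrier ≃ₜ Y2.carrier, ∀ x, h (Y1.ι x) = Y2.ι x

/-- `τ_Y : βX → βY`, the unique continuous extension of `id_X`. -/
noncomputable def OnePointExt.tau (Y : OnePointExt X) : StoneCech X → StoneCech Y.carrier :=
  stoneCechExtend (continuous_stoneCechUnit.comp Y.emb.continuous)

/-- `Θ_X(Y) = τ_Y⁻¹(Y \ X)`, a subset of `βX`. -/
noncomputable def OnePointExt.theta (Y : OnePointExt X) : Set (StoneCech X) :=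
  Y.tau ⁻¹' {stoneCechUnit Y.pt}

/-- A zero-set: `f⁻¹(0)` for a continuous `f : Z → [0,1]`. -/
def IsZeroSet {Z : Type u} [TopologicalSpace Z] (A : Set Z) : Prop :=
  ∃ f : Z → unitInterval, Continuous f ∧ A = f ⁻¹' {0}

/-- A cozero-set: a complement of a zero-set. -/
def IsCozeroSet {Z : Type u} [TopologicalSpace Z] (A : Set Z) : Prop :=
  ∃ f : Z → unitInterval, Continuous f ∧ A = (f ⁻¹' {0})ᶜ

/-- `λ_P X = ⋃ { int_{βX} cl_{βX} C : C a cozero-set of X whose closure in X has P }`. -/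
def lambdaP (P : (Z : Type u) → [TopologicalSpace Z] → Prop) (X : Type u)
    [TopologicalSpace X] : Set (StoneCech X) :=
  ⋃ C ∈ {C : Set X | IsCozeroSet C ∧ P (closure C)},
    interior (closure (stoneCechUnit '' C))

/-- A pseudocompact space: every continuous real-valued function is bounded. -/
def Pseudocompact (Z : Type u) [TopologicalSpace Z] : Prop :=
  ∀ f : Z → ℝ, Continuous f → ∃ M, ∀ z, |f z| ≤ M

/-- `P` is a topological property: it is invariant under homeomorphisms. -/
def TopProperty (P : (Z : Type u) → [TopologicalSpace Z] → Prop) : Prop :=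
  ∀ (Z W : Type u) [TopologicalSpace Z] [TopologicalSpace W], Z ≃ₜ W → P Z → P W

/-- `P` is closed hereditary: closed subspaces of a space with `P` have `P`. -/
def ClosedHereditary (P : (Z : Type u) → [TopologicalSpace Z] → Prop) : Prop :=
  ∀ (Z : Type u) [TopologicalSpace Z], P Z → ∀ F : Set Z, IsClosed F → P F

/-- `P` is preserved under finite closed sums of subspaces. -/
def FiniteClosedSums (P : (Z : Type u) → [TopologicalSpace Z] → Prop) : Prop :=
  ∀ (Z : Type u) [TopologicalSpace Z] [T2Space Z] (n : ℕ) (F : Fin n → Set Z),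
    (∀ i, IsClosed (F i)) → (∀ i, P (F i)) → (⋃ i, F i) = univ → P Z

/-- `P` is preserved under locally finite closed sums of subspaces. -/
def LocallyFiniteClosedSums (P : (Z : Type u) → [TopologicalSpace Z] → Prop) : Prop :=
  ∀ (Z : Type u) [TopologicalSpace Z] [T2Space Z] (ι : Type u) (F : ι → Set Z),
    LocallyFinite F → (∀ i, IsClosed (F i)) → (∀ i, P (F i)) → (⋃ i, F i) = univ → P Z

/-- `P` is preserved under countable closed sums of subspaces. -/
def CountableClosedSums (P : (Z : Type u) → [TopologicalSpace Z] → Prop) : Prop :=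
  ∀ (Z : Type u) [TopologicalSpace Z] [T2Space Z] (F : ℕ → Set Z),
    (∀ i, IsClosed (F i)) → (∀ i, P (F i)) → (⋃ i, F i) = univ → P Z

/-- Mrówka's condition (W): if a Tychonoff space `T` has a point `p` with an open base `B` at
`p` such that `T \ b` has `P` for each `b ∈ B`, then `T` has `P`. -/
def MrowkaW (P : (Z : Type u) → [TopologicalSpace Z] → Prop) : Prop :=
  ∀ (T : Type u) [TopologicalSpace T] [T35Space T] (p : T) (B : Set (Set T)),
    (∀ b ∈ B, IsOpen b ∧ p ∈ b) →
    (∀ V : Set T, IsOpen V → p ∈ V → ∃ b ∈ B, b ⊆ V) →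
    (∀ b ∈ B, P (↥(bᶜ))) → P T

/-- `X` is locally-P: every point has an open neighborhood whose closure has `P`. -/
def LocallyP (P : (Z : Type u) → [TopologicalSpace Z] → Prop)
    (X : Type u) [TopologicalSpace X] : Prop :=
  ∀ x : X, ∃ U : Set X, IsOpen U ∧ x ∈ U ∧ P (closure U)

/-- `P` coincides with pseudocompactness. -/
def IsPseudocompactness (P : (Z : Type u) → [TopologicalSpace Z] → Prop) : Prop :=
  ∀ (Z : Type u) [TopologicalSpace Z], P Z ↔ Pseudocompact Z

/-- A `P`-far one-point extension: for every zero-set `Z` of `X` contained in a cozero-set `C`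
of `X` whose closure has `P`, the closure of `Z` in the extension misses the remainder. -/
def OnePointExt.PFar (P : (Z : Type u) → [TopologicalSpace Z] → Prop)
    (Y : OnePointExt X) : Prop :=
  ∀ Z C : Set X, IsZeroSet Z → IsCozeroSet C → P (closure C) → Z ⊆ C →
    Y.pt ∉ closure (Y.ι '' Z)

/-- Čech-complete: `Z` is a Gδ-set in `βZ`. -/
def CechComplete (Z : Type u) [TopologicalSpace Z] : Prop :=
  IsGδ (Set.range (stoneCechUnit : Z → StoneCech Z))

/-- The extension is first countable at the added point. -/
def OnePointExt.FirstCountableAtPt (Y : OnePointExt X) : Prop :=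
  (𝓝 Y.pt).IsCountablyGenerated

/-- Strong zero-dimensionality: `βX` has an open base of clopen sets. -/
def StronglyZeroDimensional (X : Type u) [TopologicalSpace X] : Prop :=
  ∀ U : Set (StoneCech X), IsOpen U → ∀ x ∈ U,
    ∃ V : Set (StoneCech X), IsClopen V ∧ x ∈ V ∧ V ⊆ U

/-- `Δ` is an order-isomorphism from the subset `A` of one-point extensions of `X` (with the
order `≤`) onto the subset `B` of one-point extensions of `Y`, where extensions are regarded
up to the equivalence `OnePointExt.equiv`: `Δ` maps `A` into `B`, reflects and preserves `≤`
on `A`, and every member of `B` is equivalent to the image of a member of `A`. -/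
def RestrictedOrderIso {X Y : Type u} [TopologicalSpace X] [TopologicalSpace Y]
    (A : Set (OnePointExt X)) (B : Set (OnePointExt Y))
    (Δ : OnePointExt X → OnePointExt Y) : Prop :=
  (∀ T ∈ A, Δ T ∈ B) ∧
  (∀ T1 ∈ A, ∀ T2 ∈ A, (T1.le T2 ↔ (Δ T1).le (Δ T2))) ∧
  (∀ S ∈ B, ∃ T ∈ A, (Δ T).equiv S)


section Helpers


variable {α β : Type u} [TopologicalSpace α] [TopologicalSpace β]

/-- An embedding restricts to a homeomorphism between a subspace and its image. -/
noncomputable def embHomeo {f : α → β} (hf : Topology.IsEmbedding f) (S : Set α) :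
    ↥S ≃ₜ ↥(f '' S) :=
  (Topology.IsEmbedding.toHomeomorph (hf.comp Topology.IsEmbedding.subtypeVal)).trans
    (Homeomorph.setCongr (by rw [Set.range_comp, Subtype.range_coe]))

instance CompletelyRegularSpace.subtype [CompletelyRegularSpace α] (s : Set α) :
    CompletelyRegularSpace ↥s := by
  constructor
  intro x K hK hxK
  obtain ⟨K', hK', hKeq⟩ := isClosed_induced_iff.1 hK
  obtain ⟨f, hf, hf0, hf1⟩ := CompletelyRegularSpace.completely_regular (x : α) K' hK'
    (by intro h; exact hxK (by rw [← hKeq]; exact h))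
  exact ⟨f ∘ Subtype.val, hf.comp continuous_subtype_val, hf0,
    fun k hk => hf1 (by rw [← hKeq] at hk; exact hk)⟩

instance T35Space.subtype [T35Space α] (s : Set α) : T35Space ↥s := {}

theorem closure_eq_preimage_unit [T35Space α] (C : Set α) :
    closure C = stoneCechUnit ⁻¹' (closure (stoneCechUnit '' C)) :=
  isEmbedding_stoneCechUnit.closure_eq_preimage_closure_image C

end Helpers

section PC

theorem Pseudocompact.homeo {α β : Type u} [TopologicalSpace α] [TopologicalSpace β]
    (h : α ≃ₜ β) (hα : Pseudocompact α) : Pseudocompact β := by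
  intro f hf
  obtain ⟨M, hM⟩ := hα (f ∘ h) (hf.comp h.continuous)
  exact ⟨M, fun z => by simpa using hM (h.symm z)⟩

/-- Regular closed subsets of pseudocompact Tychonoff spaces are pseudocompact. -/
theorem pseudocompact_closure_of_isOpen {α : Type u} [TopologicalSpace α] [T35Space α]
    (hα : Pseudocompact α) {U : Set α} (hU : IsOpen U) : Pseudocompact ↥(closure U) := by
  intro f hf
  by_contra hM
  push_neg at hM
  have key : ∀ n : ℕ, ∃ u, ∃ _ : u ∈ U, ∃ W : Set α, IsOpen W ∧ u ∈ W ∧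
      ∀ z, ∀ hz : z ∈ closure U, z ∈ W → (n : ℝ) < |f ⟨z, hz⟩| := by
    intro n
    obtain ⟨z, hz⟩ := hM n
    have hopen : IsOpen {w : ↥(closure U) | (n : ℝ) < |f w|} :=
      isOpen_lt continuous_const hf.abs
    obtain ⟨W, hW, hWeq⟩ := isOpen_induced_iff.1 hopen
    have hzW : (z : α) ∈ W := by
      have : z ∈ Subtype.val ⁻¹' W := by rw [hWeq]; exact hz
      exact this
    obtain ⟨u, huW, huU⟩ := mem_closure_iff.1 z.2 W hW hzW
    refine ⟨u, huU, W, hW, huW, fun w hw hwW => ?_⟩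
    have : (⟨w, hw⟩ : ↥(closure U)) ∈ Subtype.val ⁻¹' W := hwW
    rw [hWeq] at this
    exact this
  choose u huU W hWopen huW hbig using key
  have sep : ∀ n : ℕ, ∃ φ : α → unitInterval, Continuous φ ∧ φ (u n) = 0 ∧
      EqOn φ 1 (W n ∩ U)ᶜ := fun n =>
    CompletelyRegularSpace.completely_regular (u n) (W n ∩ U)ᶜ
      ((hWopen n).inter hU).isClosed_compl (by simp [huW n, huU n])
  choose φ hφc hφ0 hφ1 using sep
  set g : ℕ → α → ℝ := fun n y => n * (1 - (φ n y : ℝ)) with hg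
  have hgc : ∀ n, Continuous (g n) := fun n =>
    continuous_const.mul (continuous_const.sub (continuous_subtype_val.comp (hφc n)))
  have hgnn : ∀ n y, 0 ≤ g n y := fun n y =>
    mul_nonneg (Nat.cast_nonneg n) (by linarith [(φ n y).2.2])
  have hsupp : ∀ n, Function.support (g n) ⊆ W n ∩ U := by
    intro n y hy
    by_contra h
    apply hy
    have h1 : φ n y = 1 := hφ1 n h
    simp [hg, h1]
  have hlf : LocallyFinite fun n => Function.support (g n) := by
    intro y
    by_cases hy : y ∈ closure U
    · set m := |f ⟨y, hy⟩| with hm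
      have hopen : IsOpen {w : ↥(closure U) | |f w| < m + 1} :=
        isOpen_lt hf.abs continuous_const
      obtain ⟨G, hG, hGeq⟩ := isOpen_induced_iff.1 hopen
      have hyG : y ∈ G := by
        have : (⟨y, hy⟩ : ↥(closure U)) ∈ Subtype.val ⁻¹' G := by
          rw [hGeq]; simp only [mem_setOf_eq, ← hm]; linarith
        exact this
      refine ⟨G, hG.mem_nhds hyG, ?_⟩
      have hsubset : {n : ℕ | (Function.support (g n) ∩ G).Nonempty} ⊆
          {n : ℕ | n < ⌈m + 1⌉₊} := by
        rintro n ⟨w, hw, hwG⟩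
        have hwWU := hsupp n hw
        have hwcl : w ∈ closure U := subset_closure hwWU.2
        have h1 : (n : ℝ) < |f ⟨w, hwcl⟩| := hbig n w hwcl hwWU.1
        have h2 : |f ⟨w, hwcl⟩| < m + 1 := by
          have : (⟨w, hwcl⟩ : ↥(closure U)) ∈ Subtype.val ⁻¹' G := hwG
          rw [hGeq] at this
          exact this
        rw [mem_setOf_eq, Nat.lt_ceil]
        linarith
      exact Set.Finite.subset (Set.finite_Iio _) hsubset
    · refine ⟨(closure U)ᶜ, (isClosed_closure.isOpen_compl).mem_nhds hy, ?_⟩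
      refine Set.Finite.subset (Set.finite_empty) ?_
      rintro n ⟨w, hw, hwc⟩
      exact absurd (subset_closure (hsupp n hw).2) hwc
  have hGc : Continuous fun y => ∑ᶠ n, g n y := continuous_finsum hgc hlf
  obtain ⟨M, hMb⟩ := hα _ hGc
  set n := ⌈M⌉₊ + 1 with hn
  have h1 : (n : ℝ) ≤ ∑ᶠ k, g k (u n) := by
    have hfin : (Function.support fun k => g k (u n)).Finite := hlf.point_finite (u n)
    have hle : g n (u n) ≤ ∑ᶠ k, g k (u n) :=
      single_le_finsum n hfin (fun j => hgnn j (u n))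
    have heq : g n (u n) = n := by simp [hg, hφ0 n]
    linarith
  have h2 : |∑ᶠ k, g k (u n)| ≤ M := hMb (u n)
  have h3 : (n : ℝ) ≤ M := le_trans h1 (le_trans (le_abs_self _) h2)
  have h4 : M < (n : ℝ) := by
    have := Nat.le_ceil M
    have : (⌈M⌉₊ : ℝ) < n := by exact_mod_cast Nat.lt_succ_self _
    linarith [Nat.le_ceil M]
  linarith

end PC

set_option linter.unusedSectionVars false

section OPE

variable [T35Space X]

theorem OnePointExt.isOpen_range (Y : OnePointExt X) : IsOpen (Set.range Y.ι) := by
  rw [Y.range_eq]; exact isOpen_compl_singleton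

theorem OnePointExt.openEmb (Y : OnePointExt X) : Topology.IsOpenEmbedding Y.ι :=
  ⟨Y.emb, Y.isOpen_range⟩

theorem OnePointExt.tau_unit (Y : OnePointExt X) (x : X) :
    Y.tau (stoneCechUnit x) = stoneCechUnit (Y.ι x) :=
  congrFun (stoneCechExtend_extends _) x

theorem OnePointExt.continuous_tau (Y : OnePointExt X) : Continuous Y.tau :=
  continuous_stoneCechExtend _

theorem OnePointExt.mem_range_of_ne (Y : OnePointExt X) {y : Y.carrier} (h : y ≠ Y.pt) :
    y ∈ Set.range Y.ι := by
  rw [Y.range_eq]; exact h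

theorem OnePointExt.theta_subset (Y : OnePointExt X) :
    Y.theta ⊆ (Set.range (stoneCechUnit : X → StoneCech X))ᶜ := by
  rintro q hq ⟨x, rfl⟩
  have h1 : Y.tau (stoneCechUnit x) = stoneCechUnit Y.pt := hq
  rw [Y.tau_unit x] at h1
  have h2 : Y.ι x = Y.pt := injective_stoneCechUnit_of_t35Space h1
  have h3 : Y.ι x ∈ Set.range Y.ι := ⟨x, rfl⟩
  rw [Y.range_eq] at h3
  exact h3 h2

theorem OnePointExt.image_closure (Y : OnePointExt X) (C : Set X)
    (h : closure (Y.ι '' C) ⊆ Set.range Y.ι) :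
    Y.ι '' (closure C) = closure (Y.ι '' C) := by
  rw [Y.emb.closure_eq_preimage_closure_image C, Set.image_preimage_eq_inter_range,
    Set.inter_eq_self_of_subset_left h]

variable {P : (Z : Type u) → [TopologicalSpace Z] → Prop}

theorem P_closure_of (hProp : TopProperty P)
    (hP : IsPseudocompactness P ∨ (ClosedHereditary P ∧ MrowkaW P ∧ FiniteClosedSums P))
    (Y : OnePointExt X) (hPY : P Y.carrier) (C : Set X) (hCo : IsOpen C)
    (hmiss : Y.pt ∉ closure (Y.ι '' C)) : P ↥(closure C) := by
  have hsub : closure (Y.ι '' C) ⊆ Set.range Y.ι := fun y hy =>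
    Y.mem_range_of_ne (fun he => hmiss (he ▸ hy))
  have homeo : ↥(closure C) ≃ₜ ↥(closure (Y.ι '' C)) :=
    (embHomeo Y.emb (closure C)).trans (Homeomorph.setCongr (Y.image_closure C hsub))
  rcases hP with hps | ⟨hch, _, _⟩
  · have h1 : Pseudocompact Y.carrier := (hps _).1 hPY
    have h3 : Pseudocompact ↥(closure (Y.ι '' C)) :=
      pseudocompact_closure_of_isOpen h1 (Y.openEmb.isOpenMap _ hCo)
    exact (hps _).2 (h3.homeo homeo.symm)
  · exact hProp _ _ homeo.symm (hch _ hPY _ isClosed_closure)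

theorem P_closure_mono (hProp : TopProperty P)
    (hP : IsPseudocompactness P ∨ (ClosedHereditary P ∧ MrowkaW P ∧ FiniteClosedSums P))
    {U C : Set X} (hUo : IsOpen U) (hsub : U ⊆ closure C) (hPC : P ↥(closure C)) :
    P ↥(closure U) := by
  set T := closure C with hT
  have hvem : Topology.IsEmbedding (Subtype.val : ↥T → X) := Topology.IsEmbedding.subtypeVal
  have him : (Subtype.val '' (Subtype.val ⁻¹' U : Set ↥T)) = U := by
    rw [Subtype.image_preimage_coe, Set.inter_eq_right.2 hsub]
  have hclsub : closure U ⊆ T := by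
    have := closure_mono hsub; rwa [closure_closure] at this
  have hcl : closure (Subtype.val ⁻¹' U : Set ↥T) = Subtype.val ⁻¹' (closure U) := by
    rw [hvem.closure_eq_preimage_closure_image, him]
  have homeo : ↥(Subtype.val ⁻¹' (closure U) : Set ↥T) ≃ₜ ↥(closure U) :=
    (embHomeo hvem _).trans (Homeomorph.setCongr
      (by rw [Subtype.image_preimage_coe, Set.inter_eq_right.2 hclsub]))
  rcases hP with hps | ⟨hch, _, _⟩
  · have h1 : Pseudocompact ↥T := (hps _).1 hPC
    have h2 : Pseudocompact ↥(closure (Subtype.val ⁻¹' U : Set ↥T)) :=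
      pseudocompact_closure_of_isOpen h1 (hUo.preimage continuous_subtype_val)
    rw [hcl] at h2
    exact (hps _).2 (h2.homeo homeo)
  · have h1 := hch _ hPC (Subtype.val ⁻¹' (closure U) : Set ↥T)
      (IsClosed.preimage continuous_subtype_val isClosed_closure)
    exact hProp _ _ homeo h1

theorem lemA (hProp : TopProperty P)
    (hP : IsPseudocompactness P ∨ (ClosedHereditary P ∧ MrowkaW P ∧ FiniteClosedSums P))
    (Y : OnePointExt X) (hPY : P Y.carrier) : (lambdaP P X)ᶜ ⊆ Y.theta := by
  intro q hq
  by_contra hqT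
  apply hq
  have hne : Y.tau q ≠ stoneCechUnit Y.pt := fun h => hqT h
  obtain ⟨f, hf0, hf1, _⟩ := exists_continuous_zero_one_of_isClosed
    (isClosed_singleton (x := Y.tau q)) (isClosed_singleton (x := stoneCechUnit Y.pt))
    (Set.disjoint_singleton.2 hne)
  set g : X → ℝ := fun x => f (stoneCechUnit (Y.ι x)) with hgdef
  have hgc : Continuous g :=
    f.continuous.comp (continuous_stoneCechUnit.comp Y.emb.continuous)
  set C : Set X := {x | g x < 1/2} with hCdef
  have hCo : IsOpen C := isOpen_lt hgc continuous_const
  have hCoz : IsCozeroSet C := by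
    refine ⟨fun x => Set.projIcc 0 1 zero_le_one (1/2 - g x),
      continuous_projIcc.comp (continuous_const.sub hgc), ?_⟩
    ext x
    have : Set.projIcc (0:ℝ) 1 zero_le_one (1/2 - g x) = 0 ↔ 1/2 - g x ≤ 0 := by
      rw [show (0 : unitInterval) = ⟨0, Set.left_mem_Icc.mpr zero_le_one⟩ from rfl]
      exact Set.projIcc_eq_left zero_lt_one
    simp only [hCdef, Set.mem_setOf_eq, Set.mem_compl_iff, Set.mem_preimage,
      Set.mem_singleton_iff, this]
    constructor
    · intro h hle; linarith
    · intro h; by_contra h2; exact h (by linarith)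
  have hmiss : Y.pt ∉ closure (Y.ι '' C) := by
    have hcl : closure (Y.ι '' C) ⊆ {y : Y.carrier | f (stoneCechUnit y) ≤ 1/2} := by
      apply closure_minimal
      · rintro y ⟨x, hx, rfl⟩; exact le_of_lt (show g x < 1/2 from hx)
      · exact isClosed_le (f.continuous.comp continuous_stoneCechUnit) continuous_const
    intro h
    have h2 := hcl h
    rw [Set.mem_setOf_eq, hf1 (Set.mem_singleton _)] at h2
    norm_num at h2
  have hPcl : P ↥(closure C) := P_closure_of hProp hP Y hPY C hCo hmiss
  set W : Set (StoneCech X) := (fun p => f (Y.tau p)) ⁻¹' Set.Iio (1/2) with hWdef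
  have hWo : IsOpen W := isOpen_Iio.preimage (f.continuous.comp Y.continuous_tau)
  have hqW : q ∈ W := by
    simp only [hWdef, Set.mem_preimage, Set.mem_Iio, hf0 (Set.mem_singleton _)]
    norm_num
  have hWsub : W ⊆ closure (stoneCechUnit '' C) := by
    refine (denseRange_stoneCechUnit.open_subset_closure_inter hWo).trans (closure_mono ?_)
    rintro p ⟨hpW, x, rfl⟩
    refine ⟨x, ?_, rfl⟩
    have : f (Y.tau (stoneCechUnit x)) < 1/2 := hpW
    rw [Y.tau_unit x] at this
    exact this
  have hqint : q ∈ interior (closure (stoneCechUnit '' C)) :=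
    _root_.mem_interior.2 ⟨W, hWsub, hWo, hqW⟩
  exact Set.mem_biUnion ⟨hCoz, hPcl⟩ hqint

theorem lemB (hProp : TopProperty P)
    (hP : IsPseudocompactness P ∨ (ClosedHereditary P ∧ MrowkaW P ∧ FiniteClosedSums P))
    (Y : OnePointExt X) (hsub : (lambdaP P X)ᶜ ⊆ Y.theta) : LocallyP P X := by
  intro x
  have hx : stoneCechUnit x ∈ lambdaP P X := by
    by_contra h
    exact Y.theta_subset (hsub h) ⟨x, rfl⟩
  rw [lambdaP, Set.mem_iUnion₂] at hx
  obtain ⟨C, ⟨hCoz, hPC⟩, hxint⟩ := hx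
  set U : Set X := stoneCechUnit ⁻¹' (interior (closure (stoneCechUnit '' C))) with hU
  have hUo : IsOpen U := isOpen_interior.preimage continuous_stoneCechUnit
  have hUsub : U ⊆ closure C := by
    rw [closure_eq_preimage_unit]; exact Set.preimage_mono interior_subset
  exact ⟨U, hUo, hxint, P_closure_mono hProp hP hUo hUsub hPC⟩

theorem coverLemma (Y : OnePointExt X) (hsub : (lambdaP P X)ᶜ ⊆ Y.theta)
    {V : Set Y.carrier} (hV : IsOpen V) (hpt : Y.pt ∈ V) :
    ∃ (n : ℕ) (C : Fin n → Set X), (∀ i, IsCozeroSet (C i)) ∧ (∀ i, P ↥(closure (C i))) ∧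
      Y.ι ⁻¹' Vᶜ ⊆ ⋃ i, closure (C i) := by
  set A : Set X := Y.ι ⁻¹' Vᶜ with hA
  set K : Set (StoneCech X) := closure (stoneCechUnit '' A) with hK
  obtain ⟨h, hhc, hh0, hh1⟩ := CompletelyRegularSpace.completely_regular Y.pt Vᶜ
    hV.isClosed_compl (by simp [hpt])
  set H : StoneCech Y.carrier → unitInterval := stoneCechExtend hhc with hH
  have hKlam : K ⊆ lambdaP P X := by
    intro k hk
    by_contra hklam
    have hkθ : Y.tau k = stoneCechUnit Y.pt := hsub hklam
    have h1 : Y.tau k ∈ closure (stoneCechUnit '' (Y.ι '' A)) := by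
      have him := image_closure_subset_closure_image (s := stoneCechUnit '' A) Y.continuous_tau
      have h2 : Y.tau k ∈ Y.tau '' K := ⟨k, hk, rfl⟩
      have h3 := him h2
      have heq : Y.tau '' (stoneCechUnit '' A) = stoneCechUnit '' (Y.ι '' A) := by
        rw [← Set.image_comp, ← Set.image_comp]
        exact Set.image_congr fun x _ => Y.tau_unit x
      rwa [heq] at h3
    have hιsub : Y.ι '' A ⊆ Vᶜ := Set.image_preimage_subset _ _
    have h3 : closure (stoneCechUnit '' (Y.ι '' A)) ⊆ H ⁻¹' {1} := by
      apply closure_minimal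
      · rintro p ⟨y, hy, rfl⟩
        have : H (stoneCechUnit y) = h y := congrFun (stoneCechExtend_extends hhc) y
        simp only [Set.mem_preimage, Set.mem_singleton_iff, this]
        exact hh1 (hιsub hy)
      · exact IsClosed.preimage (continuous_stoneCechExtend hhc) isClosed_singleton
    have h4 := h3 h1
    rw [hkθ] at h4
    have h5 : H (stoneCechUnit Y.pt) = h Y.pt := congrFun (stoneCechExtend_extends hhc) Y.pt
    rw [Set.mem_preimage, Set.mem_singleton_iff, h5, hh0] at h4
    exact zero_ne_one h4
  have hKc : IsCompact K := isClosed_closure.isCompact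
  set S := {C : Set X | IsCozeroSet C ∧ P ↥(closure C)} with hS
  have hcover : K ⊆ ⋃ C : ↥S, interior (closure (stoneCechUnit '' (C : Set X))) := by
    intro k hk
    have hm := hKlam hk
    rw [lambdaP, Set.mem_iUnion₂] at hm
    obtain ⟨C, hC, hmC⟩ := hm
    exact Set.mem_iUnion.2 ⟨⟨C, hC⟩, hmC⟩
  obtain ⟨t, ht⟩ := hKc.elim_finite_subcover _ (fun _ => isOpen_interior) hcover
  refine ⟨t.card, fun i => ((t.equivFin.symm i : ↥t) : ↥S), fun i => ?_, fun i => ?_, ?_⟩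
  · exact ((t.equivFin.symm i : ↥t) : ↥S).2.1
  · exact ((t.equivFin.symm i : ↥t) : ↥S).2.2
  · intro x hx
    have hk : stoneCechUnit x ∈ K := subset_closure ⟨x, hx, rfl⟩
    have hxcov := ht hk
    rw [Set.mem_iUnion₂] at hxcov
    obtain ⟨C, hCt, hmC⟩ := hxcov
    refine Set.mem_iUnion.2 ⟨t.equivFin ⟨C, hCt⟩, ?_⟩
    simp only [Equiv.symm_apply_apply]
    rw [closure_eq_preimage_unit]
    exact Set.mem_preimage.2 (interior_subset hmC)

theorem lemC (hProp : TopProperty P)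
    (hP : IsPseudocompactness P ∨ (ClosedHereditary P ∧ MrowkaW P ∧ FiniteClosedSums P))
    (Y : OnePointExt X) (hsub : (lambdaP P X)ᶜ ⊆ Y.theta) : P Y.carrier := by
  rcases hP with hps | ⟨hch, hMW, hfcs⟩
  · rw [hps]
    intro f hf
    set V : Set Y.carrier := f ⁻¹' (Set.Ioo (f Y.pt - 1) (f Y.pt + 1)) with hV
    have hVo : IsOpen V := isOpen_Ioo.preimage hf
    have hVpt : Y.pt ∈ V := by
      simp only [hV, Set.mem_preimage, Set.mem_Ioo]
      constructor <;> linarith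
    obtain ⟨n, C, _, hPc, hcov⟩ := coverLemma Y hsub hVo hVpt
    have hb : ∀ i, ∃ M, ∀ z : ↥(closure (C i)), |f (Y.ι z)| ≤ M := fun i =>
      ((hps _).1 (hPc i)) (fun z => f (Y.ι z))
        (hf.comp (Y.emb.continuous.comp continuous_subtype_val))
    choose M hM using hb
    refine ⟨|f Y.pt| + 1 + ∑ i, |M i|, fun z => ?_⟩
    have hsum : (0:ℝ) ≤ ∑ i, |M i| := Finset.sum_nonneg fun i _ => abs_nonneg _
    by_cases hz : z ∈ V
    · have h1 : f Y.pt - 1 < f z ∧ f z < f Y.pt + 1 := hz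
      have := le_abs_self (f Y.pt)
      have := neg_abs_le (f Y.pt)
      rw [abs_le]
      constructor <;> [skip; skip] <;> cases' h1 with h1a h1b <;> linarith
    · have hz' : z ≠ Y.pt := fun h => hz (h ▸ hVpt)
      obtain ⟨x, rfl⟩ := Y.mem_range_of_ne hz'
      have hxA : x ∈ Y.ι ⁻¹' Vᶜ := hz
      obtain ⟨i, hxi⟩ := Set.mem_iUnion.1 (hcov hxA)
      have h1 := hM i ⟨x, hxi⟩
      have h2 : M i ≤ ∑ j, |M j| :=
        le_trans (le_abs_self _) (Finset.single_le_sum (f := fun j => |M j|)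
          (fun j _ => abs_nonneg _) (Finset.mem_univ i))
      have h3 : (0:ℝ) ≤ |f Y.pt| := abs_nonneg _
      calc |f (Y.ι x)| ≤ M i := h1
        _ ≤ |f Y.pt| + 1 + ∑ j, |M j| := by linarith
  · apply hMW Y.carrier Y.pt {b | IsOpen b ∧ Y.pt ∈ b}
    · exact fun b hb => hb
    · exact fun V hVo hpt => ⟨V, ⟨hVo, hpt⟩, subset_rfl⟩
    · rintro V ⟨hVo, hVpt⟩
      obtain ⟨n, C, _, hPc, hcov⟩ := coverLemma Y hsub hVo hVpt
      set A : Set X := Y.ι ⁻¹' Vᶜ with hA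
      have hAc : IsClosed A := hVo.isClosed_compl.preimage Y.emb.continuous
      have hPA : P ↥A := by
        apply hfcs ↥A n (fun i => Subtype.val ⁻¹' (closure (C i)))
          (fun i => IsClosed.preimage continuous_subtype_val isClosed_closure)
        · intro i
          have h1 : P ↥(Subtype.val ⁻¹' A : Set ↥(closure (C i))) :=
            hch _ (hPc i) _ (IsClosed.preimage continuous_subtype_val hAc)
          have e1 : ↥(Subtype.val ⁻¹' A : Set ↥(closure (C i))) ≃ₜ ↥(closure (C i) ∩ A) :=
            (embHomeo Topology.IsEmbedding.subtypeVal _).trans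
              (Homeomorph.setCongr (Subtype.image_preimage_coe _ _))
          have e2 : ↥(Subtype.val ⁻¹' (closure (C i)) : Set ↥A) ≃ₜ ↥(A ∩ closure (C i)) :=
            (embHomeo Topology.IsEmbedding.subtypeVal _).trans
              (Homeomorph.setCongr (Subtype.image_preimage_coe _ _))
          exact hProp _ _ (e1.trans ((Homeomorph.setCongr (Set.inter_comm _ _)).trans e2.symm)) h1
        · ext z
          simp only [Set.mem_iUnion, Set.mem_univ, iff_true]
          obtain ⟨i, hi⟩ := Set.mem_iUnion.1 (hcov z.2)
          exact ⟨i, hi⟩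
      have himg : Y.ι '' A = Vᶜ := by
        rw [hA, Set.image_preimage_eq_inter_range, Y.range_eq]
        exact Set.inter_eq_self_of_subset_left (fun y hy =>
          (fun he => hy (he ▸ hVpt) : y ≠ Y.pt))
      exact hProp _ _ ((embHomeo Y.emb A).trans (Homeomorph.setCongr himg)) hPA

end OPE

section Construction

variable [T35Space X]

def collapseRel (C : Set (StoneCech X)) : Setoid (StoneCech X) :=
  ⟨fun a b => a = b ∨ (a ∈ C ∧ b ∈ C),
   ⟨fun _ => Or.inl rfl,
    by rintro a b (rfl | ⟨h1, h2⟩); exacts [Or.inl rfl, Or.inr ⟨h2, h1⟩],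
    by
      rintro a b c (rfl | ⟨h1, h2⟩) h
      · exact h
      · rcases h with rfl | ⟨h3, h4⟩
        exacts [Or.inr ⟨h1, h2⟩, Or.inr ⟨h1, h4⟩]⟩⟩

theorem collapse_cont {C : Set (StoneCech X)} :
    Continuous (Quotient.mk (collapseRel C)) := continuous_quot_mk

theorem collapse_saturated_open {C : Set (StoneCech X)} {U : Set (StoneCech X)}
    (hU : IsOpen U) (h : C ⊆ U ∨ C ∩ U = ∅) :
    IsOpen (Quotient.mk (collapseRel C) '' U) := by
  rw [← (isQuotientMap_quotient_mk' (s := collapseRel C)).isOpen_preimage]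
  have heq : Quotient.mk (collapseRel C) ⁻¹' (Quotient.mk (collapseRel C) '' U) = U := by
    ext a
    constructor
    · rintro ⟨b, hbU, hba⟩
      rcases Quotient.exact hba with rfl | ⟨hbC, haC⟩
      · exact hbU
      · rcases h with h | h
        · exact h haC
        · have hmem : b ∈ C ∩ U := ⟨hbC, hbU⟩
          rw [h] at hmem
          exact absurd hmem (Set.notMem_empty b)
    · exact fun ha => ⟨a, ha, rfl⟩
  rwa [show @Quotient.mk' _ (collapseRel C) = Quotient.mk (collapseRel C) from rfl, heq]

theorem collapse_t2 {C : Set (StoneCech X)} (hC : IsCompact C) :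
    T2Space (Quotient (collapseRel C)) := by
  have helper : ∀ x y : StoneCech X, x ≠ y → x ∉ C →
      ∃ u v : Set (Quotient (collapseRel C)), IsOpen u ∧ IsOpen v ∧
        Quotient.mk (collapseRel C) x ∈ u ∧ Quotient.mk (collapseRel C) y ∈ v ∧
        Disjoint u v := by
    intro x y hxy hxC
    have hclosed : IsClosed (C ∪ {y}) := hC.isClosed.union isClosed_singleton
    have hdisj : Disjoint ({x} : Set (StoneCech X)) (C ∪ {y}) := by
      rw [Set.disjoint_left]
      rintro a rfl (haC | ha)
      · exact hxC haC
      · exact hxy ha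
    obtain ⟨U, V, hUo, hVo, hxU, hsubV, hdUV⟩ :=
      normal_separation isClosed_singleton hclosed hdisj
    have hCU : C ∩ U = ∅ := by
      rw [Set.eq_empty_iff_forall_notMem]
      rintro a ⟨haC, haU⟩
      exact Set.disjoint_left.1 hdUV haU (hsubV (Or.inl haC))
    have hCV : C ⊆ V := fun a ha => hsubV (Or.inl ha)
    refine ⟨_, _, collapse_saturated_open hUo (Or.inr hCU),
      collapse_saturated_open hVo (Or.inl hCV),
      ⟨x, hxU rfl, rfl⟩, ⟨y, hsubV (Or.inr rfl), rfl⟩, ?_⟩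
    rw [Set.disjoint_left]
    rintro z ⟨u, huU, rfl⟩ ⟨v, hvV, hveq⟩
    rcases Quotient.exact hveq with rfl | ⟨hvC, huC⟩
    · exact Set.disjoint_left.1 hdUV huU hvV
    · have hmem : u ∈ C ∩ U := ⟨huC, huU⟩
      rw [hCU] at hmem
      exact absurd hmem (Set.notMem_empty u)
  constructor
  intro a b hab
  induction a using Quotient.ind
  induction b using Quotient.ind
  rename_i x y
  have hrel : ¬(x = y ∨ (x ∈ C ∧ y ∈ C)) := fun h => hab (Quotient.sound h)
  push_neg at hrel
  obtain ⟨hxy, hnand⟩ := hrel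
  by_cases hx : x ∈ C
  · obtain ⟨u, v, hu, hv, hyu, hxv, hd⟩ := helper y x (Ne.symm hxy) (hnand hx)
    exact ⟨v, u, hv, hu, hxv, hyu, hd.symm⟩
  · obtain ⟨u, v, hu, hv, hxu, hyv, hd⟩ := helper x y hxy hx
    exact ⟨u, v, hu, hv, hxu, hyv, hd⟩

theorem exists_onePointExt (C : Set (StoneCech X)) (hC : IsCompact C) (hne : C.Nonempty)
    (hdisj : C ⊆ (Set.range (stoneCechUnit : X → StoneCech X))ᶜ) :
    ∃ Y : OnePointExt X, Y.theta = C := by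
  haveI hT2 : T2Space (Quotient (collapseRel C)) := collapse_t2 hC
  obtain ⟨c₀, hc₀⟩ := hne
  set q : StoneCech X → Quotient (collapseRel C) := Quotient.mk _ with hq
  set Scar : Set (Quotient (collapseRel C)) := Set.range (fun x : X => q (stoneCechUnit x)) ∪ {q c₀}
    with hScar
  have hunit_not : ∀ x : X, stoneCechUnit x ∉ C := fun x hx => hdisj hx ⟨x, rfl⟩
  have hqinj : ∀ a b, a ∉ C → q a = q b → a = b := by
    intro a b ha h
    rcases Quotient.exact h with h' | ⟨h1, _⟩
    · exact h'
    · exact absurd h1 ha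
  have hCcl : IsClosed C := hC.isClosed
  have emb1 : Topology.IsOpenEmbedding (fun z : ↥(Cᶜ) => q (z : StoneCech X)) := by
    apply Topology.IsOpenEmbedding.of_continuous_injective_isOpenMap
    · exact collapse_cont.comp continuous_subtype_val
    · rintro ⟨a, ha⟩ ⟨b, hb⟩ h
      exact Subtype.ext (hqinj a b ha h)
    · intro S hS
      obtain ⟨W, hW, hWeq⟩ := isOpen_induced_iff.1 hS
      have himg : (fun z : ↥(Cᶜ) => q (z : StoneCech X)) '' S = q '' (Cᶜ ∩ W) := by
        rw [show (fun z : ↥(Cᶜ) => q (z : StoneCech X)) = q ∘ Subtype.val from rfl,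
          Set.image_comp, ← hWeq, Subtype.image_preimage_coe]
      rw [himg]
      refine collapse_saturated_open (hCcl.isOpen_compl.inter hW) (Or.inr ?_)
      rw [Set.eq_empty_iff_forall_notMem]
      rintro a ⟨haC, hac, _⟩
      exact hac haC
  have embu : Topology.IsEmbedding
      (Set.codRestrict (stoneCechUnit : X → StoneCech X) Cᶜ hunit_not) :=
    isEmbedding_stoneCechUnit.codRestrict _ _
  have embqu : Topology.IsEmbedding (fun x : X => q (stoneCechUnit x)) :=
    emb1.isEmbedding.comp embu
  have hmemS : ∀ x : X, q (stoneCechUnit x) ∈ Scar := fun x => Or.inl ⟨x, rfl⟩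
  set ι : X → ↥Scar := fun x => ⟨q (stoneCechUnit x), hmemS x⟩ with hι
  have embι : Topology.IsEmbedding ι := embqu.codRestrict _ _
  have hps : q c₀ ∈ Scar := Or.inr rfl
  set pt : ↥Scar := ⟨q c₀, hps⟩ with hpt
  have hqc : ∀ x, q (stoneCechUnit x) ≠ q c₀ := by
    intro x h
    have := hqinj _ _ (hunit_not x) h
    exact hunit_not x (this ▸ hc₀)
  have hrange : Set.range ι = {pt}ᶜ := by
    ext ⟨z, hz⟩
    simp only [Set.mem_range, Set.mem_compl_iff, Set.mem_singleton_iff]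
    constructor
    · rintro ⟨x, hx⟩ h
      have h1 : q (stoneCechUnit x) = z := congrArg Subtype.val hx
      have h2 : z = q c₀ := congrArg Subtype.val h
      exact hqc x (h1.trans h2)
    · intro h
      rcases hz with ⟨x, hx⟩ | hz0
      · exact ⟨x, Subtype.ext hx⟩
      · rw [Set.mem_singleton_iff] at hz0
        exact absurd (Subtype.ext hz0) h
  have hdense : DenseRange ι := by
    show Dense (Set.range ι)
    rw [dense_iff_inter_open]
    rintro U hU ⟨⟨z, hz⟩, hzU⟩
    rcases hz with ⟨x, hx⟩ | hz0
    · exact ⟨⟨z, Or.inl ⟨x, hx⟩⟩, hzU, ⟨x, Subtype.ext hx⟩⟩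
    · obtain ⟨W, hWo, hWeq⟩ := isOpen_induced_iff.1 hU
      have hzW : z ∈ W := by
        have : (⟨z, Or.inr hz0⟩ : ↥Scar) ∈ Subtype.val ⁻¹' W := by rw [hWeq]; exact hzU
        exact this
      rw [Set.mem_singleton_iff] at hz0
      have hc₀W : c₀ ∈ q ⁻¹' W := by
        show q c₀ ∈ W
        rw [← hz0]; exact hzW
      obtain ⟨x, hxW⟩ := denseRange_stoneCechUnit.exists_mem_open
        (hWo.preimage collapse_cont) ⟨c₀, hc₀W⟩
      refine ⟨ι x, ?_, ⟨x, rfl⟩⟩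
      have : ι x ∈ Subtype.val ⁻¹' W := hxW
      rw [hWeq] at this
      exact this
  set Y : OnePointExt X := ⟨↥Scar, inferInstance, inferInstance, ι, embι, pt, hrange, hdense⟩
    with hY
  refine ⟨Y, ?_⟩
  have hec : Continuous (Subtype.val : ↥Scar → Quotient (collapseRel C)) :=
    continuous_subtype_val
  set E := stoneCechExtend hec with hE
  have hkey : ∀ p, E (Y.tau p) = q p := by
    have hcomp : E ∘ Y.tau = q := by
      apply stoneCech_hom_ext ((continuous_stoneCechExtend hec).comp Y.continuous_tau)
        collapse_cont
      funext x
      show E (Y.tau (stoneCechUnit x)) = q (stoneCechUnit x)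
      rw [Y.tau_unit x]
      exact congrFun (stoneCechExtend_extends hec) (Y.ι x)
    exact fun p => congrFun hcomp p
  ext w
  simp only [OnePointExt.theta, Set.mem_preimage, Set.mem_singleton_iff]
  constructor
  · intro hw
    have h1 : E (Y.tau w) = q w := hkey w
    rw [hw] at h1
    have h2 : E (stoneCechUnit Y.pt) = (Y.pt : Quotient (collapseRel C)) :=
      congrFun (stoneCechExtend_extends hec) Y.pt
    have h3 : q w = q c₀ := by rw [← h1, h2]
    rcases Quotient.exact h3.symm with h' | ⟨_, h4⟩
    · exact h' ▸ hc₀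
    · exact h4
  · intro hw
    by_contra hne2
    obtain ⟨f, hf0, hf1, _⟩ := exists_continuous_zero_one_of_isClosed
      (isClosed_singleton (x := Y.tau w)) (isClosed_singleton (x := stoneCechUnit Y.pt))
      (Set.disjoint_singleton.2 hne2)
    set g : Y.carrier → ℝ := fun y => f (stoneCechUnit y) with hg
    have hgc : Continuous g := f.continuous.comp continuous_stoneCechUnit
    set V' : Set Y.carrier := g ⁻¹' (Set.Ioi (1/2)) with hV'
    have hV'o : IsOpen V' := isOpen_Ioi.preimage hgc
    have hptV' : Y.pt ∈ V' := by
      show g Y.pt ∈ Set.Ioi (1/2 : ℝ)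
      rw [Set.mem_Ioi, hg]
      simp only [hf1 (Set.mem_singleton _)]
      norm_num
    obtain ⟨W, hWo, hWeq⟩ := isOpen_induced_iff.1 hV'o
    have hCU : C ⊆ q ⁻¹' W := by
      intro c hcC
      show q c ∈ W
      have h3 : q c = q c₀ := Quotient.sound (Or.inr ⟨hcC, hc₀⟩)
      rw [h3]
      have : Y.pt ∈ Subtype.val ⁻¹' W := by rw [hWeq]; exact hptV'
      exact this
    have hwcl : w ∈ closure ((q ⁻¹' W) ∩ Set.range (stoneCechUnit : X → StoneCech X)) :=
      denseRange_stoneCechUnit.open_subset_closure_inter (hWo.preimage collapse_cont) (hCU hw)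
    have hsubcl : (q ⁻¹' W) ∩ Set.range (stoneCechUnit : X → StoneCech X) ⊆
        (fun p => f (Y.tau p)) ⁻¹' (Set.Ici (1/2)) := by
      rintro p ⟨hpU, x, rfl⟩
      show (1:ℝ)/2 ≤ f (Y.tau (stoneCechUnit x))
      rw [Y.tau_unit x]
      have hmem : Y.ι x ∈ V' := by
        rw [← hWeq]
        exact hpU
      exact le_of_lt hmem
    have hcl2 : closure ((q ⁻¹' W) ∩ Set.range (stoneCechUnit : X → StoneCech X)) ⊆
        (fun p => f (Y.tau p)) ⁻¹' (Set.Ici (1/2)) :=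
      closure_minimal hsubcl (isClosed_Ici.preimage (f.continuous.comp Y.continuous_tau))
    have hfin := hcl2 hwcl
    rw [Set.mem_preimage, Set.mem_Ici, hf0 (Set.mem_singleton _)] at hfin
    norm_num at hfin

end Construction



/-- Let `X` be a Tychonoff space and let `P` be either pseudocompactness, or
a closed hereditary Mrówka topological property preserved under finite closed sums of
subspaces.  For a one-point Tychonoff extension `Y` of `X`: `Y` has `P` iff `X` is locally-P
and `βX \ λ_P X ⊆ Θ_X(Y)`.  Consequently `Θ_X` maps `{Y ∈ E(X) : Y has P}` onto the set of
nonempty compact subsets `C` of `βX \ X` with `βX \ λ_P X ⊆ C`. -/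
theorem stmt9 {X : Type u} [TopologicalSpace X] [T35Space X]
    (P : (Z : Type u) → [TopologicalSpace Z] → Prop) (hProp : TopProperty P)
    (hP : IsPseudocompactness P ∨ (ClosedHereditary P ∧ MrowkaW P ∧ FiniteClosedSums P)) :
    (∀ Y : OnePointExt X, P Y.carrier ↔ (LocallyP P X ∧ (lambdaP P X)ᶜ ⊆ Y.theta)) ∧
    {C : Set (StoneCech X) | ∃ Y : OnePointExt X, P Y.carrier ∧ Y.theta = C} =
      {C : Set (StoneCech X) | IsCompact C ∧ C.Nonempty ∧
        C ⊆ (Set.range (stoneCechUnit : X → StoneCech X))ᶜ ∧ (lambdaP P X)ᶜ ⊆ C} := by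
  have main : ∀ Y : OnePointExt X, P Y.carrier ↔ (LocallyP P X ∧ (lambdaP P X)ᶜ ⊆ Y.theta) := by
    intro Y
    constructor
    · intro hPY
      have ha := lemA hProp hP Y hPY
      exact ⟨lemB hProp hP Y ha, ha⟩
    · rintro ⟨_, hsub⟩
      exact lemC hProp hP Y hsub
  refine ⟨main, ?_⟩
  ext Cs
  simp only [Set.mem_setOf_eq]
  constructor
  · rintro ⟨Y, hPY, rfl⟩
    refine ⟨(IsClosed.preimage Y.continuous_tau isClosed_singleton).isCompact, ?_,
      Y.theta_subset, lemA hProp hP Y hPY⟩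
    have hds : DenseRange (stoneCechUnit ∘ Y.ι) :=
      DenseRange.comp denseRange_stoneCechUnit Y.dense continuous_stoneCechUnit
    have hsub2 : Set.range (stoneCechUnit ∘ Y.ι) ⊆ Set.range Y.tau := by
      rintro _ ⟨x, rfl⟩
      exact ⟨stoneCechUnit x, Y.tau_unit x⟩
    have hrange_closed : IsClosed (Set.range Y.tau) :=
      (isCompact_range Y.continuous_tau).isClosed
    have hsurj : Set.range Y.tau = Set.univ := by
      apply Set.eq_univ_of_univ_subset
      calc Set.univ = closure (Set.range (stoneCechUnit ∘ Y.ι)) := hds.closure_range.symm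
        _ ⊆ closure (Set.range Y.tau) := closure_mono hsub2
        _ = Set.range Y.tau := hrange_closed.closure_eq
    have hmem : stoneCechUnit Y.pt ∈ Set.range Y.tau := by rw [hsurj]; trivial
    obtain ⟨w, hw⟩ := hmem
    exact ⟨w, by simp only [OnePointExt.theta, Set.mem_preimage, Set.mem_singleton_iff]; exact hw⟩
  · rintro ⟨hcomp, hne, hsub, hlam⟩
    obtain ⟨Y, hYθ⟩ := exists_onePointExt Cs hcomp hne hsub
    exact ⟨Y, lemC hProp hP Y (by rw [hYθ]; exact hlam), hYθ⟩
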